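/- arXiv:math/9805044 — 3 statements merged into one kernel-verified Lean document; each statement's English description precedes it below -/
import Mathlib

section
/- Let R' = k[[t^{n₁},…,t^{n_r}]] ⊆ k[[t]] be a semigroup ring over a field k of characteristic zero. Then every element of the R'-module R'·DR' (the R'-submodule of S·Dt generated by the derivatives of elements of R') is an exact differential, i.e. R'·D(R') = D(R'). -/
open PowerSeries

/-- The formal derivative on `k⟦t⟧` as a `k`-linear map. -/
noncomputable def formalDeriv (k : Type*) [CommRing k] :
    PowerSeries k →ₗ[k] PowerSeries k :=
  (PowerSeries.derivative k).toLinearMap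

/-- Let `R' = k⟦t^{n₁},…,t^{n_r}⟧ ⊆ k⟦t⟧` be a semigroup ring over a field `k`
of characteristic zero (the subring of power series supported on the numerical semigroup
generated by `n₁ < … < n_r`).  Then the `R'`-submodule `R'·D(R')` of `S·Dt` generated by
the derivatives of elements of `R'` consists of exact differentials: `R'·D(R') = D(R')`. -/
theorem semigroupRing_differentials_exact
    (k : Type*) [Field k] [CharZero k]
    (r : ℕ) (n : Fin r → ℕ) (hmono : StrictMono n) (hpos : ∀ i, 0 < n i)
    (R' : Subalgebra k (PowerSeries k))
    (hR' : ∀ f : PowerSeries k, f ∈ R' ↔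
      ∀ d : ℕ, PowerSeries.coeff d f ≠ 0 → d ∈ AddSubmonoid.closure (Set.range n)) :
    Submodule.span k {y : PowerSeries k | ∃ a ∈ R', ∃ b ∈ R', y = a * formalDeriv k b}
      = (Subalgebra.toSubmodule R').map (formalDeriv k) := by
  apply le_antisymm
  · rw [Submodule.span_le]
    rintro y ⟨a, ha, b, hb, rfl⟩
    set f := a * formalDeriv k b with hf
    -- support of f shifted by one lies in the semigroup
    have hsupp : ∀ d : ℕ, PowerSeries.coeff d f ≠ 0 →
        (d + 1) ∈ AddSubmonoid.closure (Set.range n) := by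
      intro d hd
      rw [hf, PowerSeries.coeff_mul] at hd
      obtain ⟨p, hp, hne⟩ := Finset.exists_ne_zero_of_sum_ne_zero hd
      have hpa : PowerSeries.coeff p.1 a ≠ 0 := fun h => hne (by rw [h, zero_mul])
      have hpb : PowerSeries.coeff p.2 (formalDeriv k b) ≠ 0 :=
        fun h => hne (by rw [h, mul_zero])
      have hcoeff : PowerSeries.coeff p.2 (formalDeriv k b)
          = PowerSeries.coeff (p.2 + 1) b * (p.2 + 1 : ℕ) := by
        simp [formalDeriv, PowerSeries.coeff_derivative]
      have hb' : PowerSeries.coeff (p.2 + 1) b ≠ 0 := by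
        intro h
        rw [hcoeff, h, zero_mul] at hpb
        exact hpb rfl
      have h1 : p.1 ∈ AddSubmonoid.closure (Set.range n) := (hR' a).mp ha p.1 hpa
      have h2 : (p.2 + 1) ∈ AddSubmonoid.closure (Set.range n) := (hR' b).mp hb _ hb'
      have : d + 1 = p.1 + (p.2 + 1) := by
        have := Finset.HasAntidiagonal.mem_antidiagonal.mp hp
        omega
      rw [this]
      exact AddSubmonoid.add_mem _ h1 h2
    -- antiderivative
    set c : PowerSeries k := PowerSeries.mk
      (fun d => if d = 0 then 0 else PowerSeries.coeff (d - 1) f / (d : k)) with hc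
    have hderiv : formalDeriv k c = f := by
      ext d
      have : PowerSeries.coeff d (formalDeriv k c)
          = PowerSeries.coeff (d + 1) c * (d + 1 : ℕ) := by
        simp [formalDeriv, PowerSeries.coeff_derivative]
      rw [this, hc, PowerSeries.coeff_mk]
      have hd1 : (d + 1 : ℕ) ≠ 0 := Nat.succ_ne_zero d
      rw [if_neg hd1]
      have hk : ((d + 1 : ℕ) : k) ≠ 0 := Nat.cast_ne_zero.mpr hd1
      field_simp
      rw [Nat.add_sub_cancel]
    have hcR : c ∈ R' := by
      rw [hR']
      intro d hd
      rw [hc, PowerSeries.coeff_mk] at hd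
      by_cases h0 : d = 0
      · rw [if_pos h0] at hd; exact absurd rfl hd
      · rw [if_neg h0] at hd
        have hf' : PowerSeries.coeff (d - 1) f ≠ 0 := by
          intro h; rw [h, zero_div] at hd; exact hd rfl
        have := hsupp (d - 1) hf'
        rwa [Nat.sub_add_cancel (Nat.one_le_iff_ne_zero.mpr h0)] at this
    exact ⟨c, hcR, hderiv⟩
  · rintro y ⟨b, hb, rfl⟩
    exact Submodule.subset_span ⟨1, one_mem R', b, hb, (one_mul _).symm⟩
end

section
/- Let k be a field of characteristic zero, S = k[[t]], and R' = k[[t^{n₁},…,t^{n_r}]] a semigroup ring with k ⊆ R' ⊆ S. Then S·D(S)/R'·D(R') is isomorphic as a k-vector space to S/R'; in particular dim_k(S·DS/R'·DR') = dim_k(S/R'). -/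
open PowerSeries

/-- The `k`-subspace `A·D(B)` of `S·Dt = S` spanned by the products `a·Db`, `a ∈ A`, `b ∈ B`. -/
noncomputable def mulDeriv (k : Type*) [CommRing k]
    (A B : Set (PowerSeries k)) : Submodule k (PowerSeries k) :=
  Submodule.span k {y : PowerSeries k | ∃ a ∈ A, ∃ b ∈ B, y = a * formalDeriv k b}

section Aux

variable (k : Type*) [Field k]

/-- reading off coefficients outside `T`. -/
noncomputable def coeffMap (T : Set ℕ) :
    PowerSeries k →ₗ[k] ({d : ℕ // d ∉ T} → k) where
  toFun f := fun d => PowerSeries.coeff (R := k) d.1 f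
  map_add' := by intro f g; funext d; simp
  map_smul' := by intro c f; funext d; simp

lemma coeffMap_surjective (T : Set ℕ) : Function.Surjective (coeffMap k T) := by
  classical
  intro g
  refine ⟨PowerSeries.mk fun d => if h : d ∈ T then 0 else g ⟨d, h⟩, ?_⟩
  funext d
  simp [coeffMap, dif_neg d.2]

lemma mem_ker_coeffMap (T : Set ℕ) (f : PowerSeries k) :
    f ∈ LinearMap.ker (coeffMap k T) ↔ ∀ d : ℕ, PowerSeries.coeff (R := k) d f ≠ 0 → d ∈ T := by
  constructor
  · intro h d hd
    by_contra hdT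
    exact hd (congrFun (LinearMap.mem_ker.mp h) ⟨d, hdT⟩)
  · intro h
    rw [LinearMap.mem_ker]
    funext d
    by_contra hd
    exact d.2 (h d.1 hd)

lemma mulDeriv_univ_top : mulDeriv k Set.univ Set.univ = ⊤ := by
  rw [eq_top_iff]
  intro f _
  apply Submodule.subset_span
  refine ⟨f, trivial, PowerSeries.X, trivial, ?_⟩
  simp [formalDeriv]

variable [CharZero k]

lemma mulDeriv_eq_ker (M : AddSubmonoid ℕ)
    (R' : Subalgebra k (PowerSeries k))
    (hR' : ∀ f : PowerSeries k, f ∈ R' ↔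
      ∀ d : ℕ, PowerSeries.coeff (R := k) d f ≠ 0 → d ∈ M) :
    mulDeriv k (R' : Set (PowerSeries k)) (R' : Set (PowerSeries k))
      = LinearMap.ker (coeffMap k {e : ℕ | e + 1 ∈ M}) := by
  apply le_antisymm
  · apply Submodule.span_le.mpr
    rintro y ⟨a, ha, b, hb, rfl⟩
    rw [SetLike.mem_coe, mem_ker_coeffMap]
    intro d hd
    rw [PowerSeries.coeff_mul] at hd
    obtain ⟨p, hp, hne⟩ := Finset.exists_ne_zero_of_sum_ne_zero hd
    rw [Finset.HasAntidiagonal.mem_antidiagonal] at hp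
    have h1 : PowerSeries.coeff (R := k) p.1 a ≠ 0 := fun h => hne (by simp [h])
    have h2 : PowerSeries.coeff (R := k) p.2 (formalDeriv k b) ≠ 0 := fun h => hne (by simp [h])
    rw [formalDeriv, Derivation.coeFn_coe, PowerSeries.coeff_derivative] at h2
    have h2' : PowerSeries.coeff (R := k) (p.2 + 1) b ≠ 0 := fun h => h2 (by simp [h])
    have hma := (hR' a).mp ha p.1 h1
    have hmb := (hR' b).mp hb (p.2 + 1) h2'
    have : p.1 + (p.2 + 1) ∈ M := add_mem hma hmb
    simpa [Set.mem_setOf_eq, ← hp, add_assoc] using this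
  · intro f hf
    rw [mem_ker_coeffMap] at hf
    -- antiderivative
    set b : PowerSeries k := PowerSeries.mk
      (fun m => if m = 0 then 0 else PowerSeries.coeff (R := k) (m - 1) f / m) with hbdef
    have hDb : formalDeriv k b = f := by
      ext d
      rw [formalDeriv, Derivation.coeFn_coe, PowerSeries.coeff_derivative]
      have hd1 : (d : k) + 1 ≠ 0 := by exact_mod_cast Nat.succ_ne_zero d
      simp only [hbdef, PowerSeries.coeff_mk, Nat.succ_ne_zero, if_false,
        Nat.add_sub_cancel]
      push_cast
      field_simp
    have hbR : b ∈ R' := by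
      rw [hR']
      intro m hm
      rcases Nat.eq_zero_or_pos m with h0 | h0
      · exfalso; apply hm; simp [hbdef, h0]
      · have hm' : PowerSeries.coeff (R := k) (m - 1) f ≠ 0 := by
          intro h; apply hm; simp [hbdef, Nat.pos_iff_ne_zero.mp h0, h]
        have := hf (m - 1) hm'
        simpa [Nat.sub_add_cancel h0] using this
    apply Submodule.subset_span
    exact ⟨1, R'.one_mem, b, hbR, by rw [hDb, one_mul]⟩

lemma subalg_eq_ker (M : AddSubmonoid ℕ)
    (R' : Subalgebra k (PowerSeries k))
    (hR' : ∀ f : PowerSeries k, f ∈ R' ↔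
      ∀ d : ℕ, PowerSeries.coeff (R := k) d f ≠ 0 → d ∈ M) :
    Subalgebra.toSubmodule R' = LinearMap.ker (coeffMap k (M : Set ℕ)) := by
  ext f
  rw [Subalgebra.mem_toSubmodule, mem_ker_coeffMap, hR']
  simp [SetLike.mem_coe]

end Aux

/-- For a semigroup ring `R' = k⟦t^{n₁},…,t^{n_r}⟧ ⊆ S = k⟦t⟧` over a field of
characteristic zero, `S·D(S)/R'·D(R')` is isomorphic as a `k`-vector space to `S/R'`;
in particular `dim_k (S·DS/R'·DR') = dim_k (S/R')`. -/
theorem semigroupRing_SDS_mod_RDR_iso_S_mod_R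
    (k : Type*) [Field k] [CharZero k]
    (r : ℕ) (n : Fin r → ℕ) (hmono : StrictMono n) (hpos : ∀ i, 0 < n i)
    (R' : Subalgebra k (PowerSeries k))
    (hR' : ∀ f : PowerSeries k, f ∈ R' ↔
      ∀ d : ℕ, PowerSeries.coeff (R := k) d f ≠ 0 → d ∈ AddSubmonoid.closure (Set.range n)) :
    Nonempty
      ((↥(mulDeriv k Set.univ Set.univ) ⧸
          (mulDeriv k (R' : Set (PowerSeries k)) (R' : Set (PowerSeries k))).comap
            (mulDeriv k Set.univ Set.univ).subtype)
        ≃ₗ[k] (PowerSeries k ⧸ Subalgebra.toSubmodule R'))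
    ∧ Module.rank k
        (↥(mulDeriv k Set.univ Set.univ) ⧸
          (mulDeriv k (R' : Set (PowerSeries k)) (R' : Set (PowerSeries k))).comap
            (mulDeriv k Set.univ Set.univ).subtype)
      = Module.rank k (PowerSeries k ⧸ Subalgebra.toSubmodule R') := by
  set M := AddSubmonoid.closure (Set.range n) with hM
  set N := mulDeriv k (R' : Set (PowerSeries k)) (R' : Set (PowerSeries k)) with hN
  -- step 1: identify the big submodule with ⊤
  have htop := mulDeriv_univ_top k
  let e0 : ↥(mulDeriv k Set.univ Set.univ) ≃ₗ[k] PowerSeries k :=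
    LinearEquiv.ofTop _ htop
  have hmap : (N.comap (mulDeriv k Set.univ Set.univ).subtype).map (e0 : _ →ₗ[k] _) = N := by
    ext x
    constructor
    · rintro ⟨y, hy, rfl⟩
      simpa [e0] using hy
    · intro hx
      refine ⟨⟨x, htop ▸ Submodule.mem_top⟩, by simpa using hx, rfl⟩
  let e1 := Submodule.Quotient.equiv (N.comap (mulDeriv k Set.univ Set.univ).subtype) N e0 hmap
  -- step 2: quotient by N ≅ functions on complement of M'
  have hker2 := mulDeriv_eq_ker k M R' hR'
  let e2 : (PowerSeries k ⧸ N) ≃ₗ[k] ({d : ℕ // d ∉ {e : ℕ | e + 1 ∈ M}} → k) :=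
    (Submodule.quotEquivOfEq _ _ hker2).trans
      ((coeffMap k {e : ℕ | e + 1 ∈ M}).quotKerEquivOfSurjective
        (coeffMap_surjective k _))
  -- step 3: shift bijection between complements
  let sh : {d : ℕ // d ∉ {e : ℕ | e + 1 ∈ M}} ≃ {d : ℕ // d ∉ (M : Set ℕ)} :=
    { toFun := fun x => ⟨x.1 + 1, x.2⟩
      invFun := fun y => ⟨y.1 - 1, by
        have hy0 : y.1 ≠ 0 := fun h => y.2 (h ▸ M.zero_mem)
        rw [Set.mem_setOf_eq, Nat.sub_add_cancel (Nat.one_le_iff_ne_zero.mpr hy0)]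
        exact fun h => y.2 h⟩
      left_inv := fun x => by simp
      right_inv := fun y => by
        have hy0 : y.1 ≠ 0 := fun h => y.2 (h ▸ M.zero_mem)
        ext
        exact Nat.sub_add_cancel (Nat.one_le_iff_ne_zero.mpr hy0) }
  let e3 : ({d : ℕ // d ∉ {e : ℕ | e + 1 ∈ M}} → k) ≃ₗ[k] ({d : ℕ // d ∉ (M : Set ℕ)} → k) :=
    LinearEquiv.funCongrLeft k k sh.symm
  -- step 4: back to S / R'
  have hker4 := subalg_eq_ker k M R' hR'
  let e4 : ({d : ℕ // d ∉ (M : Set ℕ)} → k) ≃ₗ[k] (PowerSeries k ⧸ Subalgebra.toSubmodule R') :=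
    (((coeffMap k (M : Set ℕ)).quotKerEquivOfSurjective
        (coeffMap_surjective k _)).symm).trans
      (Submodule.quotEquivOfEq _ _ hker4.symm)
  let e := ((e1.trans e2).trans e3).trans e4
  exact ⟨⟨e⟩, e.rank_eq⟩
end

section
/- Let R be a one-dimensional complete local domain over an algebraically closed field k of characteristic zero, which is a semigroup ring k[[t^{n₁},…,t^{n_r}]] inside its normalization S = k[[t]]. Then its first quadratic transform R₁ is again a semigroup ring, and dim_k(R₁·DR₁/R·DR) = dim_k(R₁/R). -/
open PowerSeries

/-- A subalgebra of `k⟦t⟧` is a semigroup ring if it consists exactly of the power series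
supported on some numerical semigroup `M ⊆ ℕ`. -/
def IsSemigroupRing {k : Type*} [Field k] (R : Subalgebra k (PowerSeries k)) : Prop :=
  ∃ M : AddSubmonoid ℕ, ∀ f : PowerSeries k,
    f ∈ R ↔ ∀ d : ℕ, PowerSeries.coeff d f ≠ 0 → d ∈ M

/-- The first quadratic transform `R₁ = R[x₂/x, …, xₙ/x]` of `R`,
given the quotients `zs i = xᵢ/x ∈ S`. -/
noncomputable def quadTransform {k : Type*} [Field k] {m : ℕ}
    (R : Subalgebra k (PowerSeries k)) (zs : Fin m → PowerSeries k) :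
    Subalgebra k (PowerSeries k) :=
  Algebra.adjoin k ((R : Set (PowerSeries k)) ∪ Set.range zs)

namespace QTAux
variable {k : Type*} [Field k]
def V (k : Type*) [Field k] (N : Set ℕ) : Submodule k (PowerSeries k) where
  carrier := {f | ∀ d : ℕ, coeff d f ≠ 0 → d ∈ N}
  add_mem' := by
    intro f g hf hg d hd
    rw [map_add] at hd
    by_cases h : coeff d f ≠ 0
    · exact hf d h
    · push_neg at h
      exact hg d (by simpa [h] using hd)
  zero_mem' := by simp
  smul_mem' := by
    intro c f hf d hd
    refine hf d fun h => hd ?_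
    simp [h]
theorem mem_V {N : Set ℕ} {f : PowerSeries k} :
    f ∈ V k N ↔ ∀ d : ℕ, coeff d f ≠ 0 → d ∈ N := Iff.rfl
theorem X_pow_mem_V {N : Set ℕ} {a : ℕ} (ha : a ∈ N) : (X : PowerSeries k) ^ a ∈ V k N := by
  intro d hd
  rw [coeff_X_pow] at hd
  rcases eq_or_ne d a with rfl | h
  · exact ha
  · simp [h] at hd
theorem mul_mem_V {N : AddSubmonoid ℕ} {f g : PowerSeries k}
    (hf : f ∈ V k (N : Set ℕ)) (hg : g ∈ V k (N : Set ℕ)) : f * g ∈ V k (N : Set ℕ) := by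
  intro d hd
  rw [coeff_mul] at hd
  obtain ⟨p, hp, hne⟩ := Finset.exists_ne_zero_of_sum_ne_zero hd
  have h1 : coeff p.1 f ≠ 0 := fun h => hne (by simp [h])
  have h2 : coeff p.2 g ≠ 0 := fun h => hne (by simp [h])
  have := Finset.HasAntidiagonal.mem_antidiagonal.mp hp
  exact this ▸ N.add_mem (hf _ h1) (hg _ h2)
theorem inv_mem_V {N : AddSubmonoid ℕ} {f : PowerSeries k}
    (hf : f ∈ V k (N : Set ℕ)) : f⁻¹ ∈ V k (N : Set ℕ) := by
  intro d
  induction d using Nat.strong_induction_on with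
  | _ d ih =>
    intro hd
    rw [coeff_inv] at hd
    split_ifs at hd with h
    · exact h ▸ N.zero_mem
    · have hsum : (∑ p ∈ Finset.HasAntidiagonal.antidiagonal d,
          if p.2 < d then coeff p.1 f * coeff p.2 f⁻¹ else 0) ≠ 0 := by
        intro h0
        apply hd
        rw [h0, mul_zero]
      obtain ⟨p, hp, hne⟩ := Finset.exists_ne_zero_of_sum_ne_zero hsum
      have hlt : p.2 < d := by
        by_contra hc
        simp [hc] at hne
      rw [if_pos hlt] at hne
      have h1 : coeff p.1 f ≠ 0 := fun h => hne (by simp [h])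
      have h2 : coeff p.2 f⁻¹ ≠ 0 := fun h => hne (by simp [h])
      have := Finset.HasAntidiagonal.mem_antidiagonal.mp hp
      exact this ▸ N.add_mem (hf _ h1) (ih p.2 hlt h2)

theorem mulDeriv_eq [CharZero k] (A : Subalgebra k (PowerSeries k)) (N : AddSubmonoid ℕ)
    (hA : ∀ f : PowerSeries k, f ∈ A ↔ ∀ d : ℕ, coeff d f ≠ 0 → d ∈ N) :
    mulDeriv k (A : Set (PowerSeries k)) (A : Set (PowerSeries k))
      = V k {d : ℕ | d + 1 ∈ N} := by
  apply le_antisymm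
  · rw [mulDeriv, Submodule.span_le]
    rintro y ⟨a, ha, b, hb, rfl⟩ d hd
    have hfd : formalDeriv k b = PowerSeries.derivative k b := rfl
    rw [coeff_mul] at hd
    obtain ⟨p, hp, hne⟩ := Finset.exists_ne_zero_of_sum_ne_zero hd
    have h1 : coeff p.1 a ≠ 0 := fun h => hne (by simp [h])
    have h2 : coeff p.2 (formalDeriv k b) ≠ 0 := fun h => hne (by simp [h])
    rw [hfd, coeff_derivative] at h2
    have h2' : coeff (p.2 + 1) b ≠ 0 := fun h => h2 (by simp [h])
    have hd1 : d + 1 = p.1 + (p.2 + 1) := by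
      have := Finset.HasAntidiagonal.mem_antidiagonal.mp hp
      omega
    rw [Set.mem_setOf_eq, hd1]
    exact N.add_mem ((hA a).mp ha _ h1) ((hA b).mp hb _ h2')
  · intro f hf
    set g : PowerSeries k := PowerSeries.mk fun d => if d = 0 then 0 else coeff (d - 1) f / d
      with hgdef
    have hgA : g ∈ A := by
      rw [hA]
      intro d hd
      rw [hgdef, coeff_mk] at hd
      split_ifs at hd with h
      · exact absurd rfl hd
      · have h1 : coeff (d - 1) f ≠ 0 := fun h0 => hd (by rw [h0, zero_div])
        have := hf _ h1
        rwa [Set.mem_setOf_eq, Nat.sub_add_cancel (Nat.one_le_iff_ne_zero.mpr h)] at this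
    have hDg : formalDeriv k g = f := by
      ext e
      show coeff e (PowerSeries.derivative k g) = coeff e f
      rw [coeff_derivative, hgdef, coeff_mk, if_neg (Nat.succ_ne_zero e),
        Nat.add_sub_cancel]
      have hne : ((e : k) + 1) ≠ 0 := Nat.cast_add_one_ne_zero e
      push_cast
      rw [div_mul_cancel₀ _ hne]
    apply Submodule.subset_span
    exact ⟨1, A.one_mem, g, hgA, by rw [one_mul, hDg]⟩

noncomputable def quotEquivFun (A B : Set ℕ) :
    ((V k B) ⧸ (V k A).comap (V k B).subtype) ≃ₗ[k] ((B \ A : Set ℕ) → k) := by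
  classical
  have hs : Function.Surjective
      (((LinearMap.pi fun d : (B \ A : Set ℕ) =>
        (coeff (d : ℕ))).comp (V k B).subtype)) := by
    intro w
    refine ⟨⟨PowerSeries.mk fun d => if h : d ∈ B \ A then w ⟨d, h⟩ else 0, ?_⟩, ?_⟩
    · intro d hd
      rw [coeff_mk] at hd
      split_ifs at hd with h
      · exact h.1
      · exact absurd rfl hd
    · funext d
      simp only [LinearMap.comp_apply, LinearMap.pi_apply, Submodule.subtype_apply,
        coeff_mk, dif_pos d.2]
  have hk : LinearMap.ker (((LinearMap.pi fun d : (B \ A : Set ℕ) =>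
      (coeff (d : ℕ))).comp (V k B).subtype)) = (V k A).comap (V k B).subtype := by
    ext f
    simp only [LinearMap.mem_ker, Submodule.mem_comap, Submodule.subtype_apply]
    constructor
    · intro h d hd
      by_contra hdA
      have hdB : (d : ℕ) ∈ B := f.2 d hd
      have := congrFun h ⟨d, hdB, hdA⟩
      simp only [LinearMap.comp_apply, LinearMap.pi_apply, Submodule.subtype_apply] at this
      exact hd this
    · intro h
      funext d
      simp only [LinearMap.comp_apply, LinearMap.pi_apply, Submodule.subtype_apply,
        Pi.zero_apply]
      by_contra hne
      exact d.2.2 (h _ hne)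
  exact (Submodule.quotEquivOfEq _ _ hk.symm).trans
    (LinearMap.quotKerEquivOfSurjective _ hs)

end QTAux

set_option maxHeartbeats 1600000 in
set_option synthInstance.maxHeartbeats 400000 in
/-- Let `R` be a one-dimensional complete local domain over an algebraically
closed field `k` of characteristic zero which is a semigroup ring inside its normalization
`S = k⟦t⟧`.  Then its first quadratic transform `R₁` is again a semigroup ring, and
`dim_k (R₁·DR₁ / R·DR) = dim_k (R₁/R)`. -/
theorem quadTransform_of_semigroupRing
    (k : Type*) [Field k] [IsAlgClosed k] [CharZero k]
    (R : Subalgebra k (PowerSeries k)) [IsLocalRing ↥R]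
    (hsg : IsSemigroupRing R)
    -- `S = k⟦t⟧` is the normalization of `R`: it lies in the quotient field of `R`
    (hfrac : ∀ f : PowerSeries k, ∃ a b : ↥R, b ≠ 0 ∧ (b : PowerSeries k) * f = a)
    -- and is a finite `R`-module
    (hfin : Module.Finite ↥R (PowerSeries k))
    -- a minimal system of generators `x, x₂, …, xₙ` of the maximal ideal,
    (m : ℕ) (x : ↥R) (xs : Fin m → ↥R)
    (hgen : Ideal.span (insert x (Set.range xs)) = IsLocalRing.maximalIdeal ↥R)
    (hminimal : ¬ ∃ T : Set ↥R, T ⊂ insert x (Set.range xs) ∧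
      Ideal.span T = IsLocalRing.maximalIdeal ↥R)
    -- with `x` of minimal value: `ν(x) < ν(xᵢ)`
    (hval : ∀ y : ↥R, y ∈ IsLocalRing.maximalIdeal ↥R → y ≠ 0 →
      (x : PowerSeries k).order ≤ (y : PowerSeries k).order)
    (hord : ∀ i, (x : PowerSeries k).order < ((xs i : ↥R) : PowerSeries k).order)
    -- the elements `zs i = xᵢ/x` of `S`
    (zs : Fin m → PowerSeries k) (hz : ∀ i, (x : PowerSeries k) * zs i = xs i) :
    IsSemigroupRing (quadTransform R zs) ∧
    Module.rank k
        (↥(mulDeriv k (quadTransform R zs : Set (PowerSeries k))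
              (quadTransform R zs : Set (PowerSeries k))) ⧸
          (mulDeriv k (R : Set (PowerSeries k)) (R : Set (PowerSeries k))).comap
            (mulDeriv k (quadTransform R zs : Set (PowerSeries k))
              (quadTransform R zs : Set (PowerSeries k))).subtype)
      = Module.rank k
        (↥(Subalgebra.toSubmodule (quadTransform R zs)) ⧸
          (Subalgebra.toSubmodule R).comap
            (Subalgebra.toSubmodule (quadTransform R zs)).subtype) := by
  classical
  obtain ⟨M, hM⟩ := hsg
  -- conductor
  obtain ⟨a0, b0, hb0, hab0⟩ := hfrac X
  have hb0' : (b0 : PowerSeries k) ≠ 0 := fun h => hb0 (Subtype.ext h)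
  have hbex : ∃ d : ℕ, coeff d (b0 : PowerSeries k) ≠ 0 := by
    by_contra h
    push_neg at h
    exact hb0' (PowerSeries.ext fun d => by simpa using h d)
  set p := Nat.find hbex with hpdef
  have hp : coeff p (b0 : PowerSeries k) ≠ 0 := Nat.find_spec hbex
  have hpM : p ∈ M := (hM _).mp b0.2 p hp
  have hp1M : p + 1 ∈ M := by
    have h1 : coeff (p + 1) ((b0 : PowerSeries k) * X) ≠ 0 := by
      rw [← pow_one (X : PowerSeries k), coeff_mul_X_pow]
      exact hp
    rw [hab0] at h1
    exact (hM _).mp a0.2 _ h1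
  set cM := p * p with hcMdef
  have hcond : ∀ d : ℕ, cM ≤ d → d ∈ M := by
    intro d hd
    rcases Nat.eq_zero_or_pos p with hp0 | hppos
    · have h1M : (1 : ℕ) ∈ M := by rwa [hp0, zero_add] at hp1M
      have := AddSubmonoid.nsmul_mem M h1M d
      simpa using this
    · set q := d / p with hq
      set r := d % p with hr
      have hdm : p * q + r = d := Nat.div_add_mod d p
      have hrp : r < p := Nat.mod_lt _ hppos
      have hqr : r ≤ q := by
        have : p ≤ q := (Nat.le_div_iff_mul_le hppos).mpr (by rwa [hcMdef] at hd)
        omega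
      have hmem : r • (p + 1) + (q - r) • p ∈ M :=
        M.add_mem (AddSubmonoid.nsmul_mem M hp1M r) (AddSubmonoid.nsmul_mem M hpM (q - r))
      have heq : r • (p + 1) + (q - r) • p = d := by
        simp only [smul_eq_mul]
        have h2 : (q - r) * p = q * p - r * p := Nat.sub_mul q r p
        have h3 : r * p ≤ q * p := Nat.mul_le_mul_right p hqr
        have h4 : q * p = p * q := Nat.mul_comm q p
        have h5 : r * (p + 1) = r * p + r := by ring
        omega
      rwa [heq] at hmem
  -- units and nonunits of R
  have hunit : ∀ (f : PowerSeries k) (hf : f ∈ R), constantCoeff f ≠ 0 →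
      IsUnit (⟨f, hf⟩ : ↥R) := by
    intro f hf h0
    have hfV : f ∈ QTAux.V k (M : Set ℕ) := (hM f).mp hf
    have hinv : f⁻¹ ∈ R := (hM _).mpr (QTAux.inv_mem_V hfV)
    exact IsUnit.of_mul_eq_one (a := ⟨f, hf⟩) ⟨f⁻¹, hinv⟩
      (Subtype.ext (PowerSeries.mul_inv_cancel f h0))
  have hnonunit : ∀ (f : PowerSeries k) (hf : f ∈ R), constantCoeff f = 0 →
      (⟨f, hf⟩ : ↥R) ∈ IsLocalRing.maximalIdeal ↥R := by
    intro f hf h0 hu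
    obtain ⟨v, hv⟩ := IsUnit.exists_right_inv hu
    have := congrArg (fun y : ↥R => constantCoeff (y : PowerSeries k)) hv
    simp only [MulMemClass.coe_mul, map_mul, OneMemClass.coe_one, map_one, h0, zero_mul] at this
    exact zero_ne_one this
  -- x is nonzero
  have hxmem : x ∈ IsLocalRing.maximalIdeal ↥R :=
    hgen ▸ Ideal.subset_span (Set.mem_insert _ _)
  have hx0 : (x : PowerSeries k) ≠ 0 := by
    intro h
    have hxe : x = 0 := Subtype.ext h
    have hme : IsEmpty (Fin m) := by
      by_contra he
      rw [not_isEmpty_iff] at he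
      obtain ⟨i⟩ := he
      have := hord i
      rw [h, PowerSeries.order_zero] at this
      exact (not_top_lt this)
    have hrange : Set.range xs = ∅ := Set.range_eq_empty xs
    have hbot : IsLocalRing.maximalIdeal ↥R = ⊥ := by
      rw [← hgen, hrange, insert_empty_eq, hxe]
      simp [Ideal.span_singleton_eq_bot]
    have hcm : cM + 1 ∈ M := hcond _ (Nat.le_succ cM)
    have hXR : (X : PowerSeries k) ^ (cM + 1) ∈ R := (hM _).mpr (QTAux.X_pow_mem_V hcm)
    have hXm : (⟨_, hXR⟩ : ↥R) ∈ IsLocalRing.maximalIdeal ↥R := by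
      apply hnonunit
      rw [map_pow, constantCoeff_X, zero_pow (Nat.succ_ne_zero cM)]
    rw [hbot, Ideal.mem_bot] at hXm
    have := congrArg (fun y : ↥R => coeff (cM + 1) (y : PowerSeries k)) hXm
    simp [coeff_X_pow] at this
  -- the order n of x
  have hxex : ∃ d : ℕ, coeff d (x : PowerSeries k) ≠ 0 := by
    by_contra h
    push_neg at h
    exact hx0 (PowerSeries.ext fun d => by simpa using h d)
  set n := Nat.find hxex with hndef
  have hn : coeff n (x : PowerSeries k) ≠ 0 := Nat.find_spec hxex
  have hnmin : ∀ d, d < n → coeff d (x : PowerSeries k) = 0 := fun d hd =>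
    of_not_not (Nat.find_min hxex hd)
  have hnM : n ∈ M := (hM _).mp x.2 n hn
  have hnpos : 0 < n := by
    rcases Nat.eq_zero_or_pos n with h0 | h
    · exfalso
      have hc : constantCoeff (x : PowerSeries k) ≠ 0 := by
        rw [← coeff_zero_eq_constantCoeff_apply, ← h0]
        exact hn
      have := hunit _ x.2 hc
      rw [IsLocalRing.mem_maximalIdeal, mem_nonunits_iff] at hxmem
      exact hxmem (by simpa using this)
    · exact h
  have horder : (x : PowerSeries k).order = n := order_eq_nat.mpr ⟨hn, hnmin⟩
  have hxslow : ∀ i, ∀ d, d ≤ n → coeff d ((xs i : ↥R) : PowerSeries k) = 0 := by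
    intro i d hd
    apply coeff_of_lt_order
    calc (d : ℕ∞) ≤ (n : ℕ∞) := by exact_mod_cast hd
    _ < _ := horder ▸ hord i
  -- the semigroups
  set G : Set ℕ := {d | d + n ∈ M} with hGdef
  set M₁ := AddSubmonoid.closure G with hM₁def
  have hMG : (M : Set ℕ) ⊆ G := fun d hd => M.add_mem hd hnM
  have hMM₁ : ∀ d : ℕ, d ∈ M → d ∈ M₁ := fun d hd => AddSubmonoid.subset_closure (hMG hd)
  -- the unit u with x = Xⁿ · u
  obtain ⟨u, hu⟩ : (X : PowerSeries k) ^ n ∣ (x : PowerSeries k) :=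
    X_pow_dvd_iff.mpr fun d hd => hnmin d hd
  have hu0 : constantCoeff u ≠ 0 := by
    have : coeff (0 + n) ((X : PowerSeries k) ^ n * u) ≠ 0 := by
      rw [← hu, zero_add]
      exact hn
    rwa [coeff_X_pow_mul, coeff_zero_eq_constantCoeff_apply] at this
  have huM₁ : u ∈ QTAux.V k (M₁ : Set ℕ) := by
    intro d hd
    have : coeff (d + n) (x : PowerSeries k) ≠ 0 := by
      rw [hu, coeff_X_pow_mul]
      exact hd
    exact AddSubmonoid.subset_closure ((hM _).mp x.2 _ this)
  have huinv : u⁻¹ ∈ QTAux.V k (M₁ : Set ℕ) := QTAux.inv_mem_V huM₁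
  have hu1 : u * u⁻¹ = 1 := PowerSeries.mul_inv_cancel u hu0
  have huc : constantCoeff u⁻¹ ≠ 0 := by
    intro h
    have := congrArg (constantCoeff) hu1
    rw [map_mul, h, mul_zero, map_one] at this
    exact zero_ne_one this
  have hupow : ∀ j : ℕ, (u⁻¹) ^ j ∈ QTAux.V k (M₁ : Set ℕ) := by
    intro j
    induction j with
    | zero =>
      intro d hd
      rw [pow_zero, coeff_one] at hd
      split_ifs at hd with h
      · exact h ▸ M₁.zero_mem
      · exact absurd rfl hd
    | succ j ih =>
      rw [pow_succ]
      exact QTAux.mul_mem_V ih huinv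
  -- membership in R of monomials
  have hXmemR : ∀ a ∈ M, (X : PowerSeries k) ^ a ∈ R := fun a ha =>
    (hM _).mpr (QTAux.X_pow_mem_V ha)
  -- division by x stays inside the quadratic transform
  have L1 : ∀ y : ↥R, y ∈ IsLocalRing.maximalIdeal ↥R →
      ∀ w : PowerSeries k, (x : PowerSeries k) * w = y → w ∈ quadTransform R zs := by
    intro y hy w hw
    rw [← hgen, Ideal.span, Submodule.mem_span_insert] at hy
    obtain ⟨a, z, hz', rfl⟩ := hy
    rw [Submodule.mem_span_range_iff_exists_fun] at hz'
    obtain ⟨c, hc⟩ := hz'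
    have key : (x : PowerSeries k) * ((a : PowerSeries k)
        + ∑ i, (c i : PowerSeries k) * zs i) = ((a • x + z : ↥R) : PowerSeries k) := by
      rw [← hc]
      push_cast [smul_eq_mul]
      rw [mul_add, Finset.mul_sum]
      congr 1
      · ring
      · apply Finset.sum_congr rfl
        intro i _
        rw [← mul_assoc, mul_comm ((x : PowerSeries k)) ((c i : PowerSeries k)), mul_assoc,
          hz i]
    have hw' : w = (a : PowerSeries k) + ∑ i, (c i : PowerSeries k) * zs i :=
      mul_left_cancel₀ hx0 (hw.trans key.symm)
    rw [hw']
    apply add_mem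
    · exact Algebra.subset_adjoin (Set.mem_union_left _ a.2)
    · apply sum_mem
      intro i _
      exact mul_mem (Algebra.subset_adjoin (Set.mem_union_left _ (c i).2))
        (Algebra.subset_adjoin (Set.mem_union_right _ ⟨i, rfl⟩))
  -- products of u⁻¹·X^g lie in the quadratic transform
  have LST : ∀ l : List ℕ, (∀ g ∈ l, g ∈ G) →
      (u⁻¹) ^ l.length * (X : PowerSeries k) ^ l.sum ∈ quadTransform R zs := by
    intro l
    induction l with
    | nil =>
      intro _
      simpa using (quadTransform R zs).one_mem
    | cons g l' ih =>
      intro hl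
      have hgM : g + n ∈ M := hl g List.mem_cons_self
      have h1 : u⁻¹ * (X : PowerSeries k) ^ g ∈ quadTransform R zs := by
        have hy : (X : PowerSeries k) ^ (g + n) ∈ R := hXmemR _ hgM
        have hym : (⟨_, hy⟩ : ↥R) ∈ IsLocalRing.maximalIdeal ↥R := by
          apply hnonunit
          rw [map_pow, constantCoeff_X, zero_pow (by omega : g + n ≠ 0)]
        apply L1 _ hym
        show (x : PowerSeries k) * (u⁻¹ * X ^ g) = X ^ (g + n)
        rw [hu, show (X : PowerSeries k) ^ n * u * (u⁻¹ * X ^ g)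
          = (X ^ n * X ^ g) * (u * u⁻¹) by ring, hu1, mul_one, ← pow_add]
        ring_nf
      have h2 := ih fun g' hg' => hl g' (List.mem_cons_of_mem g hg')
      have h3 : (u⁻¹) ^ (g :: l').length * (X : PowerSeries k) ^ (g :: l').sum
          = (u⁻¹ * X ^ g) * ((u⁻¹) ^ l'.length * X ^ l'.sum) := by
        rw [List.length_cons, List.sum_cons, pow_succ, pow_add]
        ring
      rw [h3]
      exact mul_mem h1 h2
  -- main downward induction
  have L2 : ∀ b : ℕ, ∀ f : PowerSeries k,
      (∀ d : ℕ, coeff d f ≠ 0 → d ∈ M₁ ∧ cM - b ≤ d) → f ∈ quadTransform R zs := by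
    intro b
    induction b with
    | zero =>
      intro f hf
      apply Algebra.subset_adjoin
      apply Set.mem_union_left
      apply (hM f).mpr
      intro d hd
      exact hcond d (by simpa using (hf d hd).2)
    | succ b ih =>
      intro f hf
      set a := cM - (b + 1) with hadef
      by_cases hca : coeff a f = 0
      · apply ih
        intro d hd
        refine ⟨(hf d hd).1, ?_⟩
        have := (hf d hd).2
        have hda : d ≠ a := fun h => (h ▸ hd) hca
        omega
      · have haM₁ : a ∈ M₁ := (hf a hca).1
        obtain ⟨l, hlG, hlsum⟩ := AddSubmonoid.exists_list_of_mem_closure haM₁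
        set w := (u⁻¹) ^ l.length * (X : PowerSeries k) ^ a with hwdef
        have hwR₁ : w ∈ quadTransform R zs := by
          rw [hwdef, ← hlsum]
          exact LST l hlG
        have hwsupp : ∀ d, coeff d w ≠ 0 → a ≤ d ∧ d ∈ M₁ := by
          intro d hd
          rw [hwdef, coeff_mul_X_pow'] at hd
          split_ifs at hd with hle
          · refine ⟨hle, ?_⟩
            have := hupow l.length _ hd
            have h2 : d = a + (d - a) := by omega
            rw [h2]
            exact M₁.add_mem haM₁ this
          · exact absurd rfl hd
        set c₁ := coeff a w with hc₁def
        have hc₁ : c₁ ≠ 0 := by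
          rw [hc₁def, hwdef, coeff_mul_X_pow', if_pos (le_refl a), Nat.sub_self,
            coeff_zero_eq_constantCoeff_apply, map_pow]
          exact pow_ne_zero _ huc
        have hXa : (X : PowerSeries k) ^ a ∈ quadTransform R zs := by
          have hρ : w - C c₁ * X ^ a ∈ quadTransform R zs := by
            apply ih
            intro d hd
            have hda : d ≠ a := by
              intro h
              subst h
              rw [map_sub, coeff_C_mul, coeff_X_pow, if_pos rfl, mul_one, ← hc₁def,
                sub_self] at hd
              exact hd rfl
            have hcd : coeff d w ≠ 0 := by
              rw [map_sub, coeff_C_mul, coeff_X_pow, if_neg hda, mul_zero, sub_zero] at hd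
              exact hd
            obtain ⟨hle, hdM₁⟩ := hwsupp d hcd
            exact ⟨hdM₁, by omega⟩
          have hCXa : C c₁ * X ^ a ∈ quadTransform R zs := by
            have : C c₁ * X ^ a = w - (w - C c₁ * X ^ a) := by ring
            rw [this]
            exact sub_mem hwR₁ hρ
          have : (X : PowerSeries k) ^ a = C c₁⁻¹ * (C c₁ * X ^ a) := by
            rw [← mul_assoc, ← map_mul, inv_mul_cancel₀ hc₁, map_one, one_mul]
          rw [this]
          exact mul_mem ((quadTransform R zs).algebraMap_mem c₁⁻¹) hCXa
        have hf' : f - C (coeff a f) * X ^ a ∈ quadTransform R zs := by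
          apply ih
          intro d hd
          have hda : d ≠ a := by
            intro h
            subst h
            rw [map_sub, coeff_C_mul, coeff_X_pow, if_pos rfl, mul_one, sub_self] at hd
            exact hd rfl
          have hcd : coeff d f ≠ 0 := by
            rw [map_sub, coeff_C_mul, coeff_X_pow, if_neg hda, mul_zero, sub_zero] at hd
            exact hd
          obtain ⟨hdM₁, hdge⟩ := hf d hcd
          exact ⟨hdM₁, by omega⟩
        have hsplit : f = (f - C (coeff a f) * X ^ a) + C (coeff a f) * X ^ a := by
          ring
        rw [hsplit]
        exact add_mem hf' (mul_mem ((quadTransform R zs).algebraMap_mem _) hXa)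
  -- characterization of the quadratic transform
  have hR1iff : ∀ f : PowerSeries k,
      f ∈ quadTransform R zs ↔ ∀ d : ℕ, coeff d f ≠ 0 → d ∈ M₁ := by
    intro f
    constructor
    · intro hf
      set SA₁ : Subalgebra k (PowerSeries k) :=
        { carrier := {f : PowerSeries k | ∀ d : ℕ, coeff d f ≠ 0 → d ∈ M₁}
          mul_mem' := fun hf hg => QTAux.mul_mem_V hf hg
          add_mem' := fun hf hg => (QTAux.V k (M₁ : Set ℕ)).add_mem hf hg
          algebraMap_mem' := by
            intro c d hd
            rw [show (algebraMap k (PowerSeries k)) c = C c from rfl, coeff_C] at hd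
            split_ifs at hd with h
            · exact h ▸ M₁.zero_mem
            · exact absurd rfl hd } with hSA₁def
      have hsub : quadTransform R zs ≤ SA₁ := by
        apply Algebra.adjoin_le
        rintro f (hf | ⟨i, rfl⟩)
        · intro d hd
          exact hMM₁ d ((hM f).mp hf d hd)
        · -- zs i is supported in M₁
          obtain ⟨y, hy⟩ : (X : PowerSeries k) ^ n ∣ ((xs i : ↥R) : PowerSeries k) :=
            X_pow_dvd_iff.mpr fun d hd => hxslow i d (le_of_lt hd)
          have hyG : ∀ d, coeff d y ≠ 0 → d ∈ M₁ := by
            intro d hd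
            have : coeff (d + n) ((xs i : ↥R) : PowerSeries k) ≠ 0 := by
              rw [hy, coeff_X_pow_mul]
              exact hd
            exact AddSubmonoid.subset_closure ((hM _).mp (xs i).2 _ this)
          have hXn : (X : PowerSeries k) ^ n ≠ 0 :=
            pow_ne_zero _ PowerSeries.X_ne_zero
          have huz : u * zs i = y := by
            apply mul_left_cancel₀ hXn
            rw [← mul_assoc, ← hu, hz i, hy]
          have hzsi : zs i = u⁻¹ * y := by
            rw [← huz, ← mul_assoc, PowerSeries.inv_mul_cancel u hu0, one_mul]
          rw [hzsi]
          exact QTAux.mul_mem_V huinv hyG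
      exact hsub hf
    · intro hf
      exact L2 cM f fun d hd => ⟨hf d hd, by omega⟩
  refine ⟨⟨M₁, hR1iff⟩, ?_⟩
  -- rank computation
  have e1 : mulDeriv k (quadTransform R zs : Set (PowerSeries k))
      (quadTransform R zs : Set (PowerSeries k)) = QTAux.V k {d : ℕ | d + 1 ∈ M₁} :=
    QTAux.mulDeriv_eq _ M₁ hR1iff
  have e2 : mulDeriv k (R : Set (PowerSeries k)) (R : Set (PowerSeries k))
      = QTAux.V k {d : ℕ | d + 1 ∈ M} := QTAux.mulDeriv_eq _ M hM
  have e3 : Subalgebra.toSubmodule (quadTransform R zs) = QTAux.V k (M₁ : Set ℕ) := by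
    ext f
    exact hR1iff f
  have e4 : Subalgebra.toSubmodule R = QTAux.V k (M : Set ℕ) := by
    ext f
    exact hM f
  rw [e1, e2, e3, e4]
  have eqv : ({d : ℕ | d + 1 ∈ M₁} \ {d : ℕ | d + 1 ∈ M} : Set ℕ) ≃
      ((M₁ : Set ℕ) \ (M : Set ℕ) : Set ℕ) := by
    refine ⟨fun d => ⟨d + 1, d.2.1, d.2.2⟩, fun b => ⟨b - 1, ?_, ?_⟩, ?_, ?_⟩
    · have hb0 : (b : ℕ) ≠ 0 := by
        intro h
        exact b.2.2 (h ▸ M.zero_mem)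
      show (b : ℕ) - 1 + 1 ∈ M₁
      have he : (b : ℕ) - 1 + 1 = b := by omega
      rw [he]
      exact b.2.1
    · have hb0 : (b : ℕ) ≠ 0 := fun h => b.2.2 (h ▸ M.zero_mem)
      show ¬((b : ℕ) - 1 + 1 ∈ M)
      have he : (b : ℕ) - 1 + 1 = b := by omega
      rw [he]
      exact b.2.2
    · intro d
      apply Subtype.ext
      simp
    · intro b
      apply Subtype.ext
      have hb0 : (b : ℕ) ≠ 0 := fun h => b.2.2 (h ▸ M.zero_mem)
      show (b : ℕ) - 1 + 1 = b
      omega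
  have h1 := (QTAux.quotEquivFun (k := k) {d : ℕ | d + 1 ∈ M} {d : ℕ | d + 1 ∈ M₁}).rank_eq
  have h2 := (QTAux.quotEquivFun (k := k) (M : Set ℕ) (M₁ : Set ℕ)).rank_eq
  have h3 := (LinearEquiv.funCongrLeft k k eqv).rank_eq
  rw [h1]
  rw [h2]
  exact h3.symm
end
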